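/- Let p_1,…,p_{N_s} > 0 and P = ∑_{j=1}^{N_s} p_j. Suppose (x_1^{BL},…,x_{N_s}^{BL}, t*) is an optimal solution of the block-level SB slot-variant problem with budget P (maximize t subject to CI_i(x_i, t) for all i and ∑_i ‖x_i‖² ≤ P), with t* > 0 and x_i^{BL} ≠ 0 for every i. Then for each i, the pair ( √(p_i/‖x_i^{BL}‖²)·x_i^{BL}, √(p_i)·t*/‖x_i^{BL}‖ ) is an optimal solution of the SB-SLP problem in slot i with budget p_i: it is feasible, and every pair (x, t) with CI_i(x, t) and ‖x‖² ≤ p_i satisfies t ≤ √(p_i)·t*/‖x_i^{BL}‖. -/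
import Mathlib


open scoped BigOperators

/-- The constructive-interference (CI) constraint in a given symbol slot:
`CI Nt Nr M h s γ σ x t` holds iff for every user `k`,
`Re((h_kᵀ x)/s_k) − |Im((h_kᵀ x)/s_k)| / tan(π/M) ≥ t·√(γ_k)·σ`. -/
noncomputable def CI (Nt Nr M : ℕ) (h : Fin Nr → Fin Nt → ℂ)
    (s : Fin Nr → ℂ) (γ : Fin Nr → ℝ) (σ : ℝ)
    (x : Fin Nt → ℂ) (t : ℝ) : Prop :=
  ∀ k : Fin Nr,
    ((∑ j, h k j * x j) / s k).re -
        |((∑ j, h k j * x j) / s k).im| / Real.tan (Real.pi / M) ≥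
      t * Real.sqrt (γ k) * σ

lemma CI_smul {Nt Nr M : ℕ} {h : Fin Nr → Fin Nt → ℂ} {s : Fin Nr → ℂ}
    {γ : Fin Nr → ℝ} {σ : ℝ} {x : Fin Nt → ℂ} {t : ℝ}
    (c : ℝ) (hc : 0 ≤ c) (hCI : CI Nt Nr M h s γ σ x t) :
    CI Nt Nr M h s γ σ (c • x) (c * t) := by
  intro k
  have hk := hCI k
  have hsum : (∑ j, h k j * (c • x) j) = (c : ℂ) * ∑ j, h k j * x j := by
    rw [Finset.mul_sum]
    refine Finset.sum_congr rfl fun j _ => ?_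
    simp [Pi.smul_apply, Complex.real_smul]; ring
  rw [hsum, mul_div_assoc]
  set z := (∑ j, h k j * x j) / s k with hz
  have hre : ((c : ℂ) * z).re = c * z.re := by simp
  have him : ((c : ℂ) * z).im = c * z.im := by simp
  rw [hre, him, abs_mul, abs_of_nonneg hc]
  have heq : c * z.re - c * |z.im| / Real.tan (Real.pi / M)
      = c * (z.re - |z.im| / Real.tan (Real.pi / M)) := by ring
  rw [ge_iff_le] at hk ⊢
  calc c * t * Real.sqrt (γ k) * σ = c * (t * Real.sqrt (γ k) * σ) := by ring
  _ ≤ c * (z.re - |z.im| / Real.tan (Real.pi / M)) :=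
      mul_le_mul_of_nonneg_left hk hc
  _ = c * z.re - c * |z.im| / Real.tan (Real.pi / M) := by ring

lemma power_smul {Nt : ℕ} (c : ℝ) (x : Fin Nt → ℂ) :
    ∑ j, ‖(c • x) j‖ ^ 2 = c ^ 2 * ∑ j, ‖x j‖ ^ 2 := by
  rw [Finset.mul_sum]
  refine Finset.sum_congr rfl fun j _ => ?_
  simp [Pi.smul_apply, norm_smul, mul_pow, sq_abs]

/-- From a block-level SB slot-variant optimum `(x^{BL}, t*)` with budget
`P = ∑pⱼ`, `t* > 0` and all `xᵢ^{BL} ≠ 0`, each rescaled pair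
`(√(pᵢ/‖xᵢ^{BL}‖²)·xᵢ^{BL}, √(pᵢ)·t*/‖xᵢ^{BL}‖)` is an SB-SLP optimum for
slot `i` with budget `pᵢ`. -/
theorem stmt8 (Nt Nr Ns M : ℕ) (hNt : 0 < Nt) (hNr : 0 < Nr) (hNs : 0 < Ns)
    (hM : 3 ≤ M)
    (h : Fin Nr → Fin Nt → ℂ)
    (s : Fin Nr → Fin Ns → ℂ) (hs : ∀ k i, s k i ≠ 0)
    (γ : Fin Nr → Fin Ns → ℝ) (hγ : ∀ k i, 0 ≤ γ k i)
    (σ : ℝ) (hσ : 0 < σ)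
    (p : Fin Ns → ℝ) (hp : ∀ i, 0 < p i)
    (xBL : Fin Ns → Fin Nt → ℂ) (tstar : ℝ) (htstar : 0 < tstar)
    (hx0 : ∀ i, xBL i ≠ 0)
    (hfeas : ∀ i, CI Nt Nr M h (fun k => s k i) (fun k => γ k i) σ (xBL i) tstar)
    (hpow : ∑ i, ∑ j, ‖xBL i j‖ ^ 2 ≤ ∑ j, p j)
    (hopt : ∀ (x : Fin Ns → Fin Nt → ℂ) (u : ℝ),
      (∀ i, CI Nt Nr M h (fun k => s k i) (fun k => γ k i) σ (x i) u) →
      (∑ i, ∑ j, ‖x i j‖ ^ 2 ≤ ∑ j, p j) → u ≤ tstar) :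
    ∀ i,
      CI Nt Nr M h (fun k => s k i) (fun k => γ k i) σ
        (Real.sqrt (p i / ∑ j, ‖xBL i j‖ ^ 2) • xBL i)
        (Real.sqrt (p i) * tstar / Real.sqrt (∑ j, ‖xBL i j‖ ^ 2)) ∧
      (∑ j, ‖(Real.sqrt (p i / ∑ j, ‖xBL i j‖ ^ 2) • xBL i) j‖ ^ 2 ≤ p i) ∧
      (∀ (x : Fin Nt → ℂ) (u : ℝ),
        CI Nt Nr M h (fun k => s k i) (fun k => γ k i) σ x u →
        (∑ j, ‖x j‖ ^ 2 ≤ p i) →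
        u ≤ Real.sqrt (p i) * tstar / Real.sqrt (∑ j, ‖xBL i j‖ ^ 2)) := by
  have hnpos : ∀ i, 0 < ∑ j, ‖xBL i j‖ ^ 2 := by
    intro i
    obtain ⟨j, hj⟩ := Function.ne_iff.mp (hx0 i)
    exact Finset.sum_pos' (fun l _ => by positivity)
      ⟨j, Finset.mem_univ j, pow_pos (norm_pos_iff.mpr hj) 2⟩
  intro i
  set n := ∑ j, ‖xBL i j‖ ^ 2 with hn
  have hni : 0 < n := hnpos i
  have hcnn : (0:ℝ) ≤ Real.sqrt (p i / n) := Real.sqrt_nonneg _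
  have hcrw : Real.sqrt (p i / n) * tstar = Real.sqrt (p i) * tstar / Real.sqrt n := by
    rw [Real.sqrt_div (le_of_lt (hp i))]
    ring
  refine ⟨?_, ?_, ?_⟩
  · have := CI_smul (Real.sqrt (p i / n)) hcnn (hfeas i)
    rwa [hcrw] at this
  · rw [power_smul, Real.sq_sqrt (div_nonneg (hp i).le hni.le),
      div_mul_cancel₀ _ (ne_of_gt hni)]
  · intro x u hCIu hpu
    by_contra hcon
    push_neg at hcon
    have hsn : (0:ℝ) < Real.sqrt n := Real.sqrt_pos.mpr hni
    have hsp : (0:ℝ) < Real.sqrt (p i) := Real.sqrt_pos.mpr (hp i)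
    have hupos : 0 < u := lt_trans (div_pos (mul_pos hsp htstar) hsn) hcon
    have hkey : Real.sqrt (p i) * tstar < u * Real.sqrt n := by
      rwa [div_lt_iff₀ hsn] at hcon
    -- slot-i improved vector
    have hmn : (tstar / u) ^ 2 * p i < n := by
      rw [div_pow, div_mul_eq_mul_div, div_lt_iff₀ (by positivity : (0:ℝ) < u ^ 2)]
      have hsq : (Real.sqrt (p i) * tstar) ^ 2 < (u * Real.sqrt n) ^ 2 :=
        pow_lt_pow_left₀ hkey (by positivity) (by norm_num)
      nlinarith [Real.sq_sqrt (le_of_lt (hp i)), Real.sq_sqrt (le_of_lt hni), hsq]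
    have hCIy : CI Nt Nr M h (fun k => s k i) (fun k => γ k i) σ
        ((tstar / u) • x) tstar := by
      have := CI_smul (tstar / u) (by positivity) hCIu
      rwa [div_mul_cancel₀ _ (ne_of_gt hupos)] at this
    have hpowy : ∑ j, ‖((tstar / u) • x) j‖ ^ 2 ≤ (tstar / u) ^ 2 * p i := by
      rw [power_smul]
      exact mul_le_mul_of_nonneg_left hpu (by positivity)
    set ε := n - (tstar / u) ^ 2 * p i with hε
    have hεpos : 0 < ε := by simp [hε]; linarith
    set Q := ∑ j, p j with hQ
    have hnsum : n ≤ ∑ j, ∑ l, ‖xBL j l‖ ^ 2 :=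
      Finset.single_le_sum (f := fun j => ∑ l, ‖xBL j l‖ ^ 2)
        (fun j _ => Finset.sum_nonneg fun l _ => pow_nonneg (norm_nonneg _) 2) (Finset.mem_univ i)
    have hQε : 0 < Q - ε := by
      have hm : 0 < (tstar / u) ^ 2 * p i := mul_pos (pow_pos (div_pos htstar hupos) 2) (hp i)
      have : n ≤ Q := le_trans hnsum hpow
      simp only [hε]
      linarith
    set lam := Real.sqrt (Q / (Q - ε)) with hlam
    have hlamnn : 0 ≤ lam := Real.sqrt_nonneg _
    have hlamsq : lam ^ 2 = Q / (Q - ε) := Real.sq_sqrt (div_pos (by linarith) hQε).le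
    have hlam1 : 1 < lam := by
      have h2 : (1:ℝ) < Q / (Q - ε) := (one_lt_div hQε).mpr (by linarith)
      have := Real.sqrt_lt_sqrt (by norm_num) h2
      simpa using this
    set X : Fin Ns → Fin Nt → ℂ :=
      fun j => if j = i then lam • ((tstar / u) • x) else lam • xBL j with hX
    have hfeasX : ∀ j, CI Nt Nr M h (fun k => s k j) (fun k => γ k j) σ (X j)
        (lam * tstar) := by
      intro j
      by_cases hj : j = i
      · subst hj
        simp only [hX, if_pos rfl]
        exact CI_smul lam hlamnn hCIy
      · simp only [hX, if_neg hj]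
        exact CI_smul lam hlamnn (hfeas j)
    have hpowX : ∑ j, ∑ l, ‖X j l‖ ^ 2 ≤ Q := by
      have hPj : ∀ j, ∑ l, ‖X j l‖ ^ 2
          = lam ^ 2 * (if j = i then ∑ l, ‖((tstar / u) • x) l‖ ^ 2
              else ∑ l, ‖xBL j l‖ ^ 2) := by
        intro j
        simp only [hX]
        by_cases hj : j = i
        · rw [if_pos hj, power_smul, if_pos hj]
        · rw [if_neg hj, power_smul, if_neg hj]
      calc ∑ j, ∑ l, ‖X j l‖ ^ 2
          = lam ^ 2 * ∑ j, (if j = i then ∑ l, ‖((tstar / u) • x) l‖ ^ 2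
              else ∑ l, ‖xBL j l‖ ^ 2) := by
            rw [Finset.mul_sum]; exact Finset.sum_congr rfl fun j _ => hPj j
        _ ≤ lam ^ 2 * (Q - ε) := by
            apply mul_le_mul_of_nonneg_left _ (by positivity)
            have hsplit : ∑ j, (if j = i then ∑ l, ‖((tstar / u) • x) l‖ ^ 2
                else ∑ l, ‖xBL j l‖ ^ 2)
                = (∑ l, ‖((tstar / u) • x) l‖ ^ 2)
                  + ∑ j ∈ Finset.univ \ {i}, ∑ l, ‖xBL j l‖ ^ 2 := by
              rw [show (fun j => if j = i then (∑ l, ‖((tstar / u) • x) l‖ ^ 2)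
                  else ∑ l, ‖xBL j l‖ ^ 2)
                = Function.update (fun j => ∑ l, ‖xBL j l‖ ^ 2) i
                    (∑ l, ‖((tstar / u) • x) l‖ ^ 2) from ?_]
              · exact Finset.sum_update_of_mem (Finset.mem_univ i) _ _
              · funext j
                rw [Function.update_apply]
            rw [hsplit]
            have htot : (∑ l, ‖xBL i l‖ ^ 2) + ∑ j ∈ Finset.univ \ {i}, ∑ l, ‖xBL j l‖ ^ 2
                = ∑ j, ∑ l, ‖xBL j l‖ ^ 2 := by
              rw [← Finset.erase_eq]
              exact Finset.add_sum_erase _ (fun j => ∑ l, ‖xBL j l‖ ^ 2) (Finset.mem_univ i)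
            have hQn : ∑ j, ∑ l, ‖xBL j l‖ ^ 2 ≤ Q := hpow
            simp only [hε]
            linarith
        _ = Q := by
            rw [hlamsq, div_mul_cancel₀ _ (ne_of_gt hQε)]
    have := hopt X (lam * tstar) hfeasX hpowX
    nlinarith
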